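/- The isotropy subalgebra inside u(2) of a nonzero spinor ψ ∈ Δ_5^2 (i.e., the set of ω ∈ u(2) with ω·ψ = 0) is the 1-dimensional diagonal u(1) given by x_{12} = x_{34} and x_{13} = x_{14} = x_{23} = x_{24} = x_{i5} = 0. -/
import Mathlib


open Matrix Complex

/-- The explicit matrices of Clifford multiplication by `e₁,…,e₅` on the 5-dimensional
spin representation `Δ₅ ≅ ℂ⁴` (indexed `0,…,4`). -/
noncomputable def cl : Fin 5 → Matrix (Fin 4) (Fin 4) ℂ
  | 0 => !![0, 0, 0, I; 0, 0, I, 0; 0, I, 0, 0; I, 0, 0, 0]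
  | 1 => !![0, 0, 0, -1; 0, 0, 1, 0; 0, -1, 0, 0; 1, 0, 0, 0]
  | 2 => !![0, 0, -I, 0; 0, 0, 0, I; -I, 0, 0, 0; 0, I, 0, 0]
  | 3 => !![0, 0, 1, 0; 0, 0, 0, 1; -1, 0, 0, 0; 0, -1, 0, 0]
  | 4 => !![I, 0, 0, 0; 0, I, 0, 0; 0, 0, -I, 0; 0, 0, 0, -I]

/-- The fundamental form `F = e₁·e₂ + e₃·e₄` acting on spinors. -/
noncomputable def Fspin : Matrix (Fin 4) (Fin 4) ℂ := cl 0 * cl 1 + cl 2 * cl 3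

set_option maxHeartbeats 2000000 in
/-- The isotropy subalgebra inside `u(2)` of a nonzero spinor `ψ ∈ Δ₅² = ker F` is the
diagonal `u(1)`: for `ω = Σ_{i<j} x_{ij} e_i·e_j` in `u(2)` one has `ω·ψ = 0` iff
`x₁₂ = x₃₄` and `x₁₃ = x₁₄ = x₂₃ = x₂₄ = x_{i5} = 0` (indices shifted down by one). -/
theorem stmt4 (x : Fin 5 → Fin 5 → ℝ)
    (hu1 : x 0 3 + x 1 2 = 0) (hu2 : x 0 2 - x 1 3 = 0) (hu3 : ∀ i, x i 4 = 0)
    (ψ : Fin 4 → ℂ) (hψ : ψ ≠ 0) (hker : Fspin *ᵥ ψ = 0) :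
    (∑ i : Fin 5, ∑ j : Fin 5, if i < j then (x i j : ℂ) • (cl i * cl j) else 0) *ᵥ ψ = 0 ↔
      (x 0 1 = x 2 3 ∧ x 0 2 = 0 ∧ x 0 3 = 0 ∧ x 1 2 = 0 ∧ x 1 3 = 0) := by
  have key : (∑ i : Fin 5, ∑ j : Fin 5, if i < j then (x i j : ℂ) • (cl i * cl j) else 0)
      = (x 0 1 : ℂ) • (cl 0 * cl 1) + (x 0 2 : ℂ) • (cl 0 * cl 2) + (x 0 3 : ℂ) • (cl 0 * cl 3)
        + (x 0 4 : ℂ) • (cl 0 * cl 4) + (x 1 2 : ℂ) • (cl 1 * cl 2) + (x 1 3 : ℂ) • (cl 1 * cl 3)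
        + (x 1 4 : ℂ) • (cl 1 * cl 4) + (x 2 3 : ℂ) • (cl 2 * cl 3) + (x 2 4 : ℂ) • (cl 2 * cl 4)
        + (x 3 4 : ℂ) • (cl 3 * cl 4) := by
    simp [Fin.sum_univ_succ, show (Fin.succ 2 : Fin 5) = 3 from rfl,
      show ((Fin.succ 2).succ : Fin 5) = 4 from rfl, show ¬(3:Fin 5) < 2 from by decide,
      show ¬(4:Fin 5) < 2 from by decide, show (3:Fin 5) ≠ 0 from by decide,
      show (4:Fin 5) ≠ 0 from by decide]
    abel
  have h0 : ψ 0 = 0 := by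
    have e0 := congrFun hker 0
    simpa [Fspin, cl, mulVec, dotProduct, Fin.sum_univ_four, Matrix.mul_apply] using e0
  have h1 : ψ 1 = 0 := by
    have e1 := congrFun hker 1
    simpa [Fspin, cl, mulVec, dotProduct, Fin.sum_univ_four, Matrix.mul_apply] using e1
  have hne : ψ 2 ≠ 0 ∨ ψ 3 ≠ 0 := by
    by_contra hc
    push_neg at hc
    apply hψ
    funext k
    fin_cases k <;> simp [h0, h1, hc.1, hc.2]
  have hx03 : x 0 3 = -(x 1 2) := by linarith
  have hx13 : x 1 3 = x 0 2 := by linarith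
  rw [key]
  constructor
  · intro h
    have e2 := congrFun h 2
    have e3 := congrFun h 3
    simp [cl, mulVec, dotProduct, Fin.sum_univ_four, Matrix.mul_apply, Matrix.add_apply,
      Matrix.smul_apply, h0, h1, hu3, hx03, hx13] at e2 e3
    have key2 : (((x 0 1:ℂ) - x 2 3)^2 + 4*(x 0 2:ℂ)^2 + 4*(x 1 2:ℂ)^2) * ψ 2 = 0 := by
      linear_combination (-(Complex.I)*((x 0 1:ℂ) - x 2 3)) * e2
        + (2*(x 0 2:ℂ) + 2*Complex.I*(x 1 2:ℂ)) * e3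
        + ((((x 0 1:ℂ) - x 2 3)^2 + 4*(x 1 2:ℂ)^2) * ψ 2) * Complex.I_sq
    have key3 : (((x 0 1:ℂ) - x 2 3)^2 + 4*(x 0 2:ℂ)^2 + 4*(x 1 2:ℂ)^2) * ψ 3 = 0 := by
      linear_combination (Complex.I*((x 0 1:ℂ) - x 2 3)) * e3
        - (2*(x 0 2:ℂ) - 2*Complex.I*(x 1 2:ℂ)) * e2
        + ((((x 0 1:ℂ) - x 2 3)^2 + 4*(x 1 2:ℂ)^2) * ψ 3) * Complex.I_sq
    have hz : (((x 0 1:ℂ) - x 2 3)^2 + 4*(x 0 2:ℂ)^2 + 4*(x 1 2:ℂ)^2) = 0 := by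
      rcases hne with hn | hn
      · exact (mul_eq_zero.1 key2).resolve_right hn
      · exact (mul_eq_zero.1 key3).resolve_right hn
    have hzr : (x 0 1 - x 2 3)^2 + 4*(x 0 2)^2 + 4*(x 1 2)^2 = 0 := by
      exact_mod_cast hz
    have ha : x 0 1 - x 2 3 = 0 := by nlinarith [sq_nonneg (x 0 1 - x 2 3), sq_nonneg (x 0 2), sq_nonneg (x 1 2)]
    have hb : x 0 2 = 0 := by nlinarith [sq_nonneg (x 0 1 - x 2 3), sq_nonneg (x 0 2), sq_nonneg (x 1 2)]
    have hc : x 1 2 = 0 := by nlinarith [sq_nonneg (x 0 1 - x 2 3), sq_nonneg (x 0 2), sq_nonneg (x 1 2)]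
    exact ⟨by linarith, hb, by linarith, hc, by linarith⟩
  · rintro ⟨g1, g2, g3, g4, g5⟩
    rw [g1, g2, g3, g4, g5, hu3 0, hu3 1, hu3 2, hu3 3]
    have hm : (x 2 3 : ℂ) • (cl 0 * cl 1) + ((0:ℝ):ℂ) • (cl 0 * cl 2) + ((0:ℝ):ℂ) • (cl 0 * cl 3)
        + ((0:ℝ):ℂ) • (cl 0 * cl 4) + ((0:ℝ):ℂ) • (cl 1 * cl 2) + ((0:ℝ):ℂ) • (cl 1 * cl 3)
        + ((0:ℝ):ℂ) • (cl 1 * cl 4) + (x 2 3 : ℂ) • (cl 2 * cl 3) + ((0:ℝ):ℂ) • (cl 2 * cl 4)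
        + ((0:ℝ):ℂ) • (cl 3 * cl 4) = (x 2 3 : ℂ) • Fspin := by
      simp [Fspin, smul_add]
    rw [hm, smul_mulVec, hker, smul_zero]
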